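/- Let A ∈ ℝ^{n×n} be invertible, W ∈ ℝ^{n×n} symmetric positive definite, S ∈ ℝ^{n×q} of full column rank, and X_k ∈ ℝ^{n×n}. Then the matrix S^T A W A^T S is invertible, and X_{k+1} := X_k + W A^T S (S^T A W A^T S)^{-1} S^T (I − A X_k) is the unique minimizer of ‖X − X_k‖_{F(W^{-1})} over the set {X ∈ ℝ^{n×n} : S^T A X = S^T}. -/

import Mathlib

open Matrix BigOperators

/-- Squared weighted Frobenius norm: `‖X‖_{F(W⁻¹)}² = Tr(Xᵀ W⁻¹ X W⁻¹)`. -/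
noncomputable def wFNormSq {n : ℕ} (W X : Matrix (Fin n) (Fin n) ℝ) : ℝ :=
  (Xᵀ * W⁻¹ * X * W⁻¹).trace

/-- Weighted Frobenius norm `‖X‖_{F(W⁻¹)}`. -/
noncomputable def wFNorm {n : ℕ} (W X : Matrix (Fin n) (Fin n) ℝ) : ℝ :=
  Real.sqrt (wFNormSq W X)


lemma trace_tr_mul_self_nonneg {m k : ℕ} (G : Matrix (Fin m) (Fin k) ℝ) :
    0 ≤ (Gᵀ * G).trace := by
  rw [Matrix.trace]
  refine Finset.sum_nonneg fun j _ => ?_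
  simp only [Matrix.diag_apply, Matrix.mul_apply, Matrix.transpose_apply]
  exact Finset.sum_nonneg fun i _ => mul_self_nonneg _

lemma trace_tr_mul_self_pos {m k : ℕ} (G : Matrix (Fin m) (Fin k) ℝ) (hG : G ≠ 0) :
    0 < (Gᵀ * G).trace := by
  obtain ⟨i, j, hij⟩ : ∃ i j, G i j ≠ 0 := by
    by_contra h; push_neg at h; exact hG (by ext i j; simpa using h i j)
  rw [Matrix.trace]
  refine Finset.sum_pos' (fun c _ => ?_) ⟨j, Finset.mem_univ j, ?_⟩
  · simp only [Matrix.diag_apply, Matrix.mul_apply, Matrix.transpose_apply]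
    exact Finset.sum_nonneg fun i _ => mul_self_nonneg _
  · simp only [Matrix.diag_apply, Matrix.mul_apply, Matrix.transpose_apply]
    exact Finset.sum_pos' (fun a _ => mul_self_nonneg _)
      ⟨i, Finset.mem_univ i, mul_self_pos.mpr hij⟩

lemma full_rank_inj {n q : ℕ} (B : Matrix (Fin n) (Fin q) ℝ) (hB : B.rank = q) :
    ∀ x : Fin q → ℝ, B *ᵥ x = 0 → x = 0 := by
  have hker : LinearMap.ker B.mulVecLin = ⊥ := by
    have h1 := LinearMap.finrank_range_add_finrank_ker B.mulVecLin
    rw [Matrix.rank] at hB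
    rw [hB] at h1
    simp only [Module.finrank_pi, Fintype.card_fin] at h1
    have h2 : Module.finrank ℝ (LinearMap.ker B.mulVecLin) = 0 := by omega
    exact Submodule.finrank_eq_zero.mp h2
  intro x hx
  exact LinearMap.ker_eq_bot'.mp hker x (by simpa using hx)

lemma posDef_conj {n q : ℕ} {W : Matrix (Fin n) (Fin n) ℝ} (hW : W.PosDef)
    (B : Matrix (Fin n) (Fin q) ℝ) (hB : ∀ x, B *ᵥ x = 0 → x = 0) :
    (Bᵀ * W * B).PosDef := by
  rw [← Matrix.conjTranspose_eq_transpose_of_trivial B]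
  refine Matrix.PosDef.of_dotProduct_mulVec_pos
    (Matrix.isHermitian_conjTranspose_mul_mul B hW.1) fun x hx => ?_
  have hBx : B *ᵥ x ≠ 0 := fun h => hx (hB x h)
  simpa only [star_mulVec, Matrix.dotProduct_mulVec, Matrix.vecMul_vecMul]
    using hW.dotProduct_mulVec_pos hBx

open scoped MatrixOrder in
lemma wFNormSq_eq_trace {n : ℕ} {W : Matrix (Fin n) (Fin n) ℝ} (hW : W.PosDef)
    (X : Matrix (Fin n) (Fin n) ℝ) :
    ∃ G : Matrix (Fin n) (Fin n) ℝ, wFNormSq W X = (Gᵀ * G).trace ∧ (X ≠ 0 → G ≠ 0) := by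
  have hWi := hW.inv
  have hps := hWi.posSemidef
  set L := CFC.sqrt (W⁻¹) with hLdef
  have hLL : L * L = W⁻¹ := CFC.sqrt_mul_sqrt_self _ hps.nonneg
  have hLH : Lᵀ = L := by
    have h := (CFC.sqrt_nonneg (W⁻¹)).posSemidef.1
    rwa [Matrix.IsHermitian, Matrix.conjTranspose_eq_transpose_of_trivial] at h
  refine ⟨L * X * L, ?_, ?_⟩
  · have h1 : (L * X * L)ᵀ = L * Xᵀ * L := by
      simp only [Matrix.transpose_mul, hLH, Matrix.mul_assoc]
    rw [wFNormSq, ← hLL, h1]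
    rw [show L * Xᵀ * L * (L * X * L) = L * (Xᵀ * (L * L) * X * L) by
      simp only [Matrix.mul_assoc]]
    rw [Matrix.trace_mul_comm]
    simp only [Matrix.mul_assoc]
    rw [Matrix.trace_mul_comm]
    simp only [Matrix.mul_assoc]
  · intro hX hG0
    apply hX
    have hLdet : IsUnit L.det := by
      have h2 : L.det * L.det = (W⁻¹).det := by rw [← Matrix.det_mul, hLL]
      refine isUnit_iff_ne_zero.mpr fun h => ?_
      rw [h, mul_zero] at h2
      exact hWi.det_pos.ne' h2.symm
    have hid : L⁻¹ * (L * X * L) * L⁻¹ = X := by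
      rw [show L⁻¹ * (L * X * L) * L⁻¹ = L⁻¹ * L * X * (L * L⁻¹) by
        simp only [Matrix.mul_assoc], Matrix.nonsing_inv_mul _ hLdet,
        Matrix.mul_nonsing_inv _ hLdet, Matrix.one_mul, Matrix.mul_one]
    rw [← hid, hG0, Matrix.mul_zero, Matrix.zero_mul]

lemma wFNormSq_nonneg {n : ℕ} {W : Matrix (Fin n) (Fin n) ℝ} (hW : W.PosDef)
    (X : Matrix (Fin n) (Fin n) ℝ) : 0 ≤ wFNormSq W X := by
  obtain ⟨G, hG, -⟩ := wFNormSq_eq_trace hW X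
  rw [hG]; exact trace_tr_mul_self_nonneg G

lemma wFNormSq_pos {n : ℕ} {W : Matrix (Fin n) (Fin n) ℝ} (hW : W.PosDef)
    {X : Matrix (Fin n) (Fin n) ℝ} (hX : X ≠ 0) : 0 < wFNormSq W X := by
  obtain ⟨G, hG, hG0⟩ := wFNormSq_eq_trace hW X
  rw [hG]; exact trace_tr_mul_self_pos G (hG0 hX)

theorem stmt0 {n q : ℕ} (A W : Matrix (Fin n) (Fin n) ℝ)
    (S : Matrix (Fin n) (Fin q) ℝ) (Xk : Matrix (Fin n) (Fin n) ℝ)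
    (hA : IsUnit A.det) (hW : W.PosDef) (hS : S.rank = q) :
    IsUnit (Sᵀ * A * W * Aᵀ * S).det ∧
    Sᵀ * A * (Xk + W * Aᵀ * S * (Sᵀ * A * W * Aᵀ * S)⁻¹ * Sᵀ * (1 - A * Xk)) = Sᵀ ∧
    ∀ X : Matrix (Fin n) (Fin n) ℝ, Sᵀ * A * X = Sᵀ →
      X ≠ Xk + W * Aᵀ * S * (Sᵀ * A * W * Aᵀ * S)⁻¹ * Sᵀ * (1 - A * Xk) →
      wFNorm W ((Xk + W * Aᵀ * S * (Sᵀ * A * W * Aᵀ * S)⁻¹ * Sᵀ * (1 - A * Xk)) - Xk) <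
        wFNorm W (X - Xk) := by
  have hAT : IsUnit Aᵀ.det := by rwa [Matrix.det_transpose]
  have hBrank : (Aᵀ * S).rank = q := by
    rw [Matrix.rank_mul_eq_right_of_isUnit_det Aᵀ S hAT, hS]
  have hBinj := full_rank_inj (Aᵀ * S) hBrank
  have hMpd : (Sᵀ * A * W * Aᵀ * S).PosDef := by
    have heq : Sᵀ * A * W * Aᵀ * S = (Aᵀ * S)ᵀ * W * (Aᵀ * S) := by
      rw [Matrix.transpose_mul, Matrix.transpose_transpose]
      simp only [Matrix.mul_assoc]
    rw [heq]
    exact posDef_conj hW (Aᵀ * S) hBinj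
  have part1 : IsUnit (Sᵀ * A * W * Aᵀ * S).det :=
    (Matrix.isUnit_iff_isUnit_det _).mp hMpd.isUnit
  have hWdet : IsUnit W.det := (Matrix.isUnit_iff_isUnit_det W).mp hW.isUnit
  have hWsymm : Wᵀ = W := by
    have h := hW.isHermitian
    rwa [Matrix.IsHermitian, Matrix.conjTranspose_eq_transpose_of_trivial] at h
  have hWisymm : (W⁻¹)ᵀ = W⁻¹ := by rw [Matrix.transpose_nonsing_inv, hWsymm]
  -- abbreviations
  set C : Matrix (Fin n) (Fin n) ℝ := 1 - A * Xk with hC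
  set D : Matrix (Fin n) (Fin n) ℝ := W * Aᵀ * S * (Sᵀ * A * W * Aᵀ * S)⁻¹ * Sᵀ * C with hD
  have hSAD : Sᵀ * A * D = Sᵀ * C := by
    rw [hD, show Sᵀ * A * (W * Aᵀ * S * (Sᵀ * A * W * Aᵀ * S)⁻¹ * Sᵀ * C)
        = (Sᵀ * A * W * Aᵀ * S) * ((Sᵀ * A * W * Aᵀ * S)⁻¹ * (Sᵀ * C)) by
      simp only [Matrix.mul_assoc],
      Matrix.mul_nonsing_inv_cancel_left _ _ part1]
  have part2 : Sᵀ * A * (Xk + D) = Sᵀ := by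
    rw [Matrix.mul_add, hSAD, hC, Matrix.mul_sub, Matrix.mul_one]
    simp only [Matrix.mul_assoc]
    abel
  refine ⟨part1, part2, fun X hX1 hX2 => ?_⟩
  set E : Matrix (Fin n) (Fin n) ℝ := X - (Xk + D) with hE
  have hEne : E ≠ 0 := sub_ne_zero.mpr hX2
  have hSAE : Sᵀ * A * E = 0 := by
    rw [hE, Matrix.mul_sub, hX1, part2, sub_self]
  have cross : Dᵀ * W⁻¹ * E = 0 := by
    have h1 : Dᵀ * W⁻¹ * E
        = Cᵀ * (S * (((Sᵀ * A * W * Aᵀ * S)⁻¹)ᵀ * (Sᵀ * (A * E)))) := by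
      rw [hD]
      simp only [Matrix.transpose_mul, Matrix.transpose_transpose, hWsymm,
        Matrix.mul_assoc]
      rw [Matrix.mul_nonsing_inv_cancel_left _ _ hWdet]
    have h2 : Sᵀ * (A * E) = 0 := by rw [← Matrix.mul_assoc]; exact hSAE
    rw [h1, h2, Matrix.mul_zero, Matrix.mul_zero, Matrix.mul_zero]
  have expand : wFNormSq W (D + E) = wFNormSq W D + wFNormSq W E := by
    have t1 : (Dᵀ * W⁻¹ * E * W⁻¹).trace = 0 := by
      rw [cross, Matrix.zero_mul, Matrix.trace_zero]
    have t2 : (Eᵀ * W⁻¹ * D * W⁻¹).trace = 0 := by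
      rw [← Matrix.trace_transpose]
      simp only [Matrix.transpose_mul, Matrix.transpose_transpose, hWisymm]
      rw [Matrix.trace_mul_comm]
      rw [show Dᵀ * (W⁻¹ * E) * W⁻¹ = Dᵀ * W⁻¹ * E * W⁻¹ by
        simp only [Matrix.mul_assoc]]
      rw [cross, Matrix.zero_mul, Matrix.trace_zero]
    simp only [wFNormSq, Matrix.transpose_add, Matrix.add_mul, Matrix.mul_add,
      Matrix.trace_add]
    linarith
  have hXk : X - Xk = D + E := by rw [hE]; abel
  have hadd : (Xk + D) - Xk = D := by abel
  rw [hadd, hXk, wFNorm, wFNorm]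
  apply Real.sqrt_lt_sqrt (wFNormSq_nonneg hW D)
  rw [expand]
  linarith [wFNormSq_pos hW hEne]
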